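/- Local directional regularization (trajectory form, Lemma 1 with fixed trajectory): let E be a real normed vector space, let T be a natural number, and for each t ∈ {1, …, T} let A_t, c_t be real numbers and f_t : E → ℝ be differentiable at a point θ ∈ E. Define δ_t(θ) = sgn(A_t)·(f_t(θ) − c_t), the surrogate J_PG(θ) = Σ_{t=1}^T A_t·f_t(θ), and the regularizer Ω(θ) = Σ_{t=1}^T |A_t|·ψ(δ_t(θ)). Then J_PG + Ω is differentiable at θ and its Fréchet derivative there equals Σ_{t=1}^T w(δ_t(θ)) · A_t · Df_t(θ). Hence the OWPO update direction at θ coincides with the gradient of the directionally regularized policy-gradient objective J_PG + Ω. -/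

import Mathlib

/-- The one-way weight function `w(δ) = max(ε_low, min(ε_high, exp(-δ)))`. -/
noncomputable def owpoWeight (εlow εhigh : ℝ) (δ : ℝ) : ℝ :=
  max εlow (min εhigh (Real.exp (-δ)))

/-- The potential function `ψ(δ) = ∫_0^δ (w(u) − 1) du`. -/
noncomputable def owpoPotential (εlow εhigh : ℝ) (δ : ℝ) : ℝ :=
  ∫ u in (0 : ℝ)..δ, (owpoWeight εlow εhigh u - 1)

lemma owpoWeight_continuous (εlow εhigh : ℝ) :
    Continuous (fun u => owpoWeight εlow εhigh u - 1) := by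
  unfold owpoWeight
  exact (continuous_const.max (continuous_const.min (Real.continuous_exp.comp continuous_neg))).sub continuous_const

lemma owpoPotential_hasDerivAt (εlow εhigh δ : ℝ) :
    HasDerivAt (owpoPotential εlow εhigh) (owpoWeight εlow εhigh δ - 1) δ := by
  have hc := owpoWeight_continuous εlow εhigh
  exact intervalIntegral.integral_hasDerivAt_right
    (hc.intervalIntegrable _ _)
    (hc.stronglyMeasurableAtFilter _ _)
    hc.continuousAt

/-- Local directional regularization (trajectory form): the sum of the policy-gradient surrogate
`J_PG(θ) = Σ_t A_t·f_t(θ)` and the directional regularizer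
`Ω(θ) = Σ_t |A_t|·ψ(sgn(A_t)·(f_t(θ) − c_t))` is differentiable at `θ`, with Fréchet derivative
`Σ_t w(δ_t(θ)) · A_t · Df_t(θ)`, where `δ_t(θ) = sgn(A_t)·(f_t(θ) − c_t)`. -/
theorem owpo_local_directional_regularization_trajectory (εlow εhigh : ℝ)
    (hlow : 0 < εlow) (hlow1 : εlow < 1) (hhigh : 1 < εhigh)
    {E : Type*} [NormedAddCommGroup E] [NormedSpace ℝ E]
    (T : ℕ) (A c : Fin T → ℝ) (f : Fin T → E → ℝ) (θ : E)
    (Df : Fin T → (E →L[ℝ] ℝ)) (hf : ∀ t : Fin T, HasFDerivAt (f t) (Df t) θ) :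
    HasFDerivAt
      (fun θ' : E =>
        (∑ t : Fin T, A t * f t θ') +
        ∑ t : Fin T, |A t| * owpoPotential εlow εhigh (Real.sign (A t) * (f t θ' - c t)))
      (∑ t : Fin T,
        (owpoWeight εlow εhigh (Real.sign (A t) * (f t θ - c t)) * A t) • Df t) θ := by
  have key : ∀ t : Fin T,
      HasFDerivAt (fun θ' : E =>
          A t * f t θ' +
          |A t| * owpoPotential εlow εhigh (Real.sign (A t) * (f t θ' - c t)))
        ((owpoWeight εlow εhigh (Real.sign (A t) * (f t θ - c t)) * A t) • Df t) θ := by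
    intro t
    set s := Real.sign (A t) with hs
    set δ := s * (f t θ - c t) with hδ
    have h1 : HasFDerivAt (fun θ' : E => f t θ' - c t) (Df t) θ := (hf t).sub_const _
    have hδd : HasFDerivAt (fun θ' : E => s * (f t θ' - c t)) (s • Df t) θ :=
      h1.const_mul s
    have hψ : HasDerivAt (owpoPotential εlow εhigh)
        (owpoWeight εlow εhigh δ - 1) δ := owpoPotential_hasDerivAt _ _ _
    have h2 : HasFDerivAt
        (fun θ' : E => owpoPotential εlow εhigh (s * (f t θ' - c t)))
        ((owpoWeight εlow εhigh δ - 1) • (s • Df t)) θ :=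
      by have := hψ.comp_hasFDerivAt θ hδd; exact this
    have h3 : HasFDerivAt
        (fun θ' : E => |A t| * owpoPotential εlow εhigh (s * (f t θ' - c t)))
        (|A t| • ((owpoWeight εlow εhigh δ - 1) • (s • Df t))) θ :=
      h2.const_mul _
    have h4 : HasFDerivAt (fun θ' : E => A t * f t θ') ((A t) • Df t) θ :=
      (hf t).const_mul _
    have h5 := h4.fun_add h3
    refine h5.congr_fderiv ?_
    rw [smul_smul, smul_smul, ← add_smul]
    congr 1
    have habs : |A t| * s = A t := by
      rw [hs]
      rcases lt_trichotomy (A t) 0 with h | h | h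
      · rw [Real.sign_of_neg h, abs_of_neg h]; ring
      · simp [h]
      · rw [Real.sign_of_pos h, abs_of_pos h]; ring
    rw [mul_assoc, mul_comm (owpoWeight εlow εhigh δ - 1) s, ← mul_assoc, habs]
    ring
  have := HasFDerivAt.fun_sum (fun t (_ : t ∈ Finset.univ) => key t)
  refine this.congr_of_eventuallyEq (Filter.Eventually.of_forall fun θ' => ?_)
  exact (Finset.sum_add_distrib).symm
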